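/- Let a and κ be positive real constants, x_b ∈ ℝ, m ∈ ℕ, and let u : ℝ → ℂ be twice differentiable. Write ĥ := κh/√a. (i) If a·u''(x) + κ²·u(x) = (x − x_b)^{2m} for all x ∈ ℝ, then for every real h ≠ 0: u(x_b+h) = u(x_b)·cos(ĥ) + u'(x_b)·(√a/κ)·sin(ĥ) + (2m)!·h^{2m+2}·( cos(ĥ) − Σ_{j=0}^{m} (−1)^j ĥ^{2j}/(2j)! ) / ( (−1)^{m+1}·a·ĥ^{2m+2} ). (ii) If a·u''(x) + κ²·u(x) = (x − x_b)^{2m+1} for all x ∈ ℝ, then for every real h ≠ 0: u(x_b+h) = u(x_b)·cos(ĥ) + u'(x_b)·(√a/κ)·sin(ĥ) + (2m+1)!·h^{2m+3}·( sin(ĥ) − Σ_{j=0}^{m} (−1)^j ĥ^{2j+1}/(2j+1)! ) / ( (−1)^{m+1}·a·ĥ^{2m+3} ). -/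

import Mathlib

lemma helm_uniq (ω xb : ℝ) (hω : 0 < ω) (w w1 w2 : ℝ → ℂ)
    (h1 : ∀ x, HasDerivAt w (w1 x) x) (h2 : ∀ x, HasDerivAt w1 (w2 x) x)
    (hode : ∀ x, w2 x = -(ω ^ 2 : ℂ) * w x) (h0 : w xb = 0) (h0' : w1 xb = 0) :
    ∀ x, w x = 0 := by
  set E : ℝ → ℝ := fun x =>
    ω ^ 2 * ((w x).re ^ 2 + (w x).im ^ 2) + ((w1 x).re ^ 2 + (w1 x).im ^ 2) with hE
  have hre : ∀ x, HasDerivAt (fun y => (w y).re) ((w1 x).re) x := fun x =>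
    (Complex.reCLM.hasFDerivAt.comp_hasDerivAt x (h1 x))
  have him : ∀ x, HasDerivAt (fun y => (w y).im) ((w1 x).im) x := fun x =>
    (Complex.imCLM.hasFDerivAt.comp_hasDerivAt x (h1 x))
  have hre1 : ∀ x, HasDerivAt (fun y => (w1 y).re) ((w2 x).re) x := fun x =>
    (Complex.reCLM.hasFDerivAt.comp_hasDerivAt x (h2 x))
  have him1 : ∀ x, HasDerivAt (fun y => (w1 y).im) ((w2 x).im) x := fun x =>
    (Complex.imCLM.hasFDerivAt.comp_hasDerivAt x (h2 x))
  have hEderiv : ∀ x, HasDerivAt E 0 x := by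
    intro x
    have hre2 : (w2 x).re = -ω ^ 2 * (w x).re := by
      rw [hode x]; simp [Complex.mul_re, ← Complex.ofReal_pow]
    have him2 : (w2 x).im = -ω ^ 2 * (w x).im := by
      rw [hode x]; simp [Complex.mul_im, ← Complex.ofReal_pow]
    have h := ((((hre x).mul (hre x)).add ((him x).mul (him x))).const_mul (ω ^ 2)).add
      (((hre1 x).mul (hre1 x)).add ((him1 x).mul (him1 x)))
    have e0 : ω ^ 2 * ((w1 x).re * (w x).re + (w x).re * (w1 x).re +
        ((w1 x).im * (w x).im + (w x).im * (w1 x).im)) +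
        ((w2 x).re * (w1 x).re + (w1 x).re * (w2 x).re +
        ((w2 x).im * (w1 x).im + (w1 x).im * (w2 x).im)) = 0 := by
      rw [hre2, him2]; ring
    have h' := e0 ▸ h
    convert h' using 2 with y
    · rfl
    · rfl
    · funext y
      show ω ^ 2 * ((w y).re ^ 2 + (w y).im ^ 2) + ((w1 y).re ^ 2 + (w1 y).im ^ 2) = _
      simp only [Pi.add_apply, Pi.mul_apply]; ring
  have hconst : ∀ x, E x = E xb :=
    fun x => is_const_of_deriv_eq_zero (fun y => (hEderiv y).differentiableAt)
      (fun y => (hEderiv y).deriv) x xb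
  intro x
  have hx := hconst x
  have hxb : E xb = 0 := by simp [hE, h0, h0']
  rw [hxb] at hx
  simp only [hE] at hx
  have hw2 : ω ^ 2 > 0 := by positivity
  have hS : (w x).re ^ 2 + (w x).im ^ 2 ≤ 0 := by
    by_contra hc
    push_neg at hc
    nlinarith [mul_pos hw2 hc, sq_nonneg (w1 x).re, sq_nonneg (w1 x).im]
  have hre0 : (w x).re = 0 := by nlinarith [sq_nonneg (w x).re, sq_nonneg (w x).im]
  have him0 : (w x).im = 0 := by nlinarith [sq_nonneg (w x).re, sq_nonneg (w x).im]
  exact Complex.ext hre0 him0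
lemma helm_pow_deriv (c : ℂ) (n : ℕ) (x : ℝ) :
    HasDerivAt (fun y : ℝ => ((y : ℂ) - c) ^ n) ((n : ℂ) * ((x : ℂ) - c) ^ (n - 1)) x := by
  have := (((hasDerivAt_id ((x : ℝ) : ℂ)).sub_const c).pow n).comp_ofReal
  simpa using this

lemma helm_cos_deriv (ω : ℝ) (c : ℂ) (x : ℝ) :
    HasDerivAt (fun y : ℝ => Complex.cos ((ω : ℂ) * ((y : ℂ) - c)))
      (-Complex.sin ((ω : ℂ) * ((x : ℂ) - c)) * ω) x := by
  have h1 : HasDerivAt (fun z : ℂ => (ω : ℂ) * (z - c)) ((ω : ℂ) * 1) ((x : ℝ) : ℂ) :=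
    ((hasDerivAt_id _).sub_const c).const_mul _
  have := ((Complex.hasDerivAt_cos ((ω : ℂ) * (((x : ℝ) : ℂ) - c))).comp ((x : ℝ) : ℂ) h1).comp_ofReal
  simpa [mul_comm] using this

lemma helm_sin_deriv (ω : ℝ) (c : ℂ) (x : ℝ) :
    HasDerivAt (fun y : ℝ => Complex.sin ((ω : ℂ) * ((y : ℂ) - c)))
      (Complex.cos ((ω : ℂ) * ((x : ℂ) - c)) * ω) x := by
  have h1 : HasDerivAt (fun z : ℂ => (ω : ℂ) * (z - c)) ((ω : ℂ) * 1) ((x : ℝ) : ℂ) :=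
    ((hasDerivAt_id _).sub_const c).const_mul _
  have := ((Complex.hasDerivAt_sin ((ω : ℂ) * (((x : ℝ) : ℂ) - c))).comp ((x : ℝ) : ℂ) h1).comp_ofReal
  simpa [mul_comm] using this

lemma helm_sol (a κ ω : ℝ) (xb : ℝ) (ha : a ≠ 0) (hω : 0 < ω) (hκω : κ ^ 2 = a * ω ^ 2)
    (m ε : ℕ) (hε : ε ≤ 1) (d : ℕ → ℂ)
    (hrec : ∀ j < m, (a : ℂ) * d (j + 1) * ((2 * j + 2 + ε : ℕ) : ℂ) * ((2 * j + 1 + ε : ℕ) : ℂ)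
        + (κ : ℂ) ^ 2 * d j = 0)
    (hdm : (κ : ℂ) ^ 2 * d m = 1)
    (u : ℝ → ℂ) (hu : Differentiable ℝ u) (hu' : Differentiable ℝ (deriv u))
    (hode : ∀ x : ℝ, (a : ℂ) * deriv (deriv u) x + (κ : ℂ) ^ 2 * u x
        = ((x : ℂ) - xb) ^ (2 * m + ε)) :
    ∀ x : ℝ, u x =
      (u xb - ∑ j ∈ Finset.range (m + 1), d j * (0 : ℂ) ^ (2 * j + ε))
          * Complex.cos ((ω : ℂ) * ((x : ℂ) - xb))
      + ((deriv u xb - ∑ j ∈ Finset.range (m + 1),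
              d j * ((2 * j + ε : ℕ) : ℂ) * (0 : ℂ) ^ (2 * j + ε - 1)) / (ω : ℂ))
          * Complex.sin ((ω : ℂ) * ((x : ℂ) - xb))
      + ∑ j ∈ Finset.range (m + 1), d j * ((x : ℂ) - xb) ^ (2 * j + ε) := by
  have hκC : ((κ : ℂ)) ^ 2 = (a : ℂ) * (ω : ℂ) ^ 2 := by
    exact_mod_cast hκω
  have hωC : (ω : ℂ) ≠ 0 := by exact_mod_cast hω.ne'
  have haC : (a : ℂ) ≠ 0 := by exact_mod_cast ha
  set A : ℂ := u xb - ∑ j ∈ Finset.range (m + 1), d j * (0 : ℂ) ^ (2 * j + ε) with hA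
  set B : ℂ := (deriv u xb - ∑ j ∈ Finset.range (m + 1),
      d j * ((2 * j + ε : ℕ) : ℂ) * (0 : ℂ) ^ (2 * j + ε - 1)) / (ω : ℂ) with hB
  set U : ℝ → ℂ := fun x =>
    A * Complex.cos ((ω : ℂ) * ((x : ℂ) - xb)) + B * Complex.sin ((ω : ℂ) * ((x : ℂ) - xb))
    + ∑ j ∈ Finset.range (m + 1), d j * ((x : ℂ) - xb) ^ (2 * j + ε) with hU
  set U1 : ℝ → ℂ := fun x =>
    A * (-Complex.sin ((ω : ℂ) * ((x : ℂ) - xb)) * ω)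
    + B * (Complex.cos ((ω : ℂ) * ((x : ℂ) - xb)) * ω)
    + ∑ j ∈ Finset.range (m + 1),
        d j * (((2 * j + ε : ℕ) : ℂ) * ((x : ℂ) - xb) ^ (2 * j + ε - 1)) with hU1
  set U2 : ℝ → ℂ := fun x =>
    A * (-(Complex.cos ((ω : ℂ) * ((x : ℂ) - xb)) * ω) * ω)
    + B * (-Complex.sin ((ω : ℂ) * ((x : ℂ) - xb)) * ω * ω)
    + ∑ j ∈ Finset.range (m + 1),
        d j * (((2 * j + ε : ℕ) : ℂ) *
          (((2 * j + ε - 1 : ℕ) : ℂ) * ((x : ℂ) - xb) ^ (2 * j + ε - 1 - 1))) with hU2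
  have hDU : ∀ x : ℝ, HasDerivAt U (U1 x) x := by
    intro x
    exact (((helm_cos_deriv ω xb x).const_mul A).add ((helm_sin_deriv ω xb x).const_mul B)).add
      (HasDerivAt.fun_sum fun j _ => (helm_pow_deriv xb (2 * j + ε) x).const_mul (d j))
  have hDU1 : ∀ x : ℝ, HasDerivAt U1 (U2 x) x := by
    intro x
    exact (((((helm_sin_deriv ω xb x).neg).mul_const ω).const_mul A).add
      (((helm_cos_deriv ω xb x).mul_const ω).const_mul B)).add
      (HasDerivAt.fun_sum fun j _ =>
        ((helm_pow_deriv xb (2 * j + ε - 1) x).const_mul ((2 * j + ε : ℕ) : ℂ)).const_mul (d j))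
  have hUode : ∀ x : ℝ, (a : ℂ) * U2 x + (κ : ℂ) ^ 2 * U x = ((x : ℂ) - xb) ^ (2 * m + ε) := by
    intro x
    have hs : ((x : ℂ) - xb) = ((x : ℂ) - xb) := rfl
    have hsum : (a : ℂ) * ∑ j ∈ Finset.range (m + 1),
          d j * (((2 * j + ε : ℕ) : ℂ) *
            (((2 * j + ε - 1 : ℕ) : ℂ) *((x : ℂ) - xb) ^ (2 * j + ε - 1 - 1)))
        + ((a : ℂ) * (ω : ℂ) ^ 2) * ∑ j ∈ Finset.range (m + 1), d j * ((x : ℂ) - xb) ^ (2 * j + ε)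
        = ((x : ℂ) - xb) ^ (2 * m + ε) := by
      rw [Finset.mul_sum, Finset.mul_sum, Finset.sum_range_succ' _ m, Finset.sum_range_succ _ m]
      have hz : (a : ℂ) * (d 0 * (((2 * 0 + ε : ℕ) : ℂ) *
          (((2 * 0 + ε - 1 : ℕ) : ℂ) * ((x : ℂ) - xb) ^ (2 * 0 + ε - 1 - 1)))) = 0 := by
        interval_cases ε <;> norm_num
      rw [hz, add_zero]
      have hm' : ((a : ℂ) * (ω : ℂ) ^ 2) * (d m * ((x : ℂ) - xb) ^ (2 * m + ε)) = ((x : ℂ) - xb) ^ (2 * m + ε) := by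
        have h1 : ((a : ℂ) * (ω : ℂ) ^ 2) * d m = 1 := by rw [← hκC]; exact hdm
        linear_combination ((x : ℂ) - xb) ^ (2 * m + ε) * h1
      rw [hm', ← add_assoc, ← Finset.sum_add_distrib]
      have : ∀ j ∈ Finset.range m,
          (a : ℂ) * (d (j + 1) * (((2 * (j + 1) + ε : ℕ) : ℂ) *
            (((2 * (j + 1) + ε - 1 : ℕ) : ℂ) * ((x : ℂ) - xb) ^ (2 * (j + 1) + ε - 1 - 1))))
          + ((a : ℂ) * (ω : ℂ) ^ 2) * (d j * ((x : ℂ) - xb) ^ (2 * j + ε)) = 0 := by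
        intro j hj
        have hj' : j < m := Finset.mem_range.mp hj
        have e1 : 2 * (j + 1) + ε = 2 * j + 2 + ε := by omega
        have e2 : 2 * j + 2 + ε - 1 = 2 * j + 1 + ε := by omega
        have e3 : 2 * j + 1 + ε - 1 = 2 * j + ε := by omega
        rw [e1, e2, e3]
        linear_combination ((x : ℂ) - xb) ^ (2 * j + ε) * hrec j hj' - d j * ((x : ℂ) - xb) ^ (2 * j + ε) * hκC
      rw [Finset.sum_eq_zero this, zero_add]
    simp only [hU, hU2]
    linear_combination hsum + (A * Complex.cos ((ω : ℂ) * ((x : ℂ) - xb))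
      + B * Complex.sin ((ω : ℂ) * ((x : ℂ) - xb))
      + ∑ j ∈ Finset.range (m + 1), d j * ((x : ℂ) - xb) ^ (2 * j + ε)) * hκC
  have hwode : ∀ x : ℝ, (deriv (deriv u) x - U2 x) = -((ω : ℂ) ^ 2) * (u x - U x) := by
    intro x
    have h1 := hode x
    have h2 := hUode x
    have h3 : (a : ℂ) * (deriv (deriv u) x - U2 x) + (κ : ℂ) ^ 2 * (u x - U x) = 0 := by
      linear_combination h1 - h2
    rw [hκC] at h3
    apply mul_left_cancel₀ haC
    linear_combination h3
  have hw0 : u xb - U xb = 0 := by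
    simp only [hU]
    rw [sub_self, mul_zero, Complex.cos_zero, Complex.sin_zero]
    simp only [hA]
    ring
  have hw0' : deriv u xb - U1 xb = 0 := by
    simp only [hU1]
    rw [sub_self, mul_zero, Complex.cos_zero, Complex.sin_zero]
    have : ∑ j ∈ Finset.range (m + 1),
        d j * (((2 * j + ε : ℕ) : ℂ) * ((0 : ℂ)) ^ (2 * j + ε - 1))
        = ∑ j ∈ Finset.range (m + 1),
        d j * ((2 * j + ε : ℕ) : ℂ) * ((0 : ℂ)) ^ (2 * j + ε - 1) := by
      apply Finset.sum_congr rfl; intro j _; ring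
    rw [this, hB]
    field_simp
    ring
  have key := helm_uniq ω xb hω (fun x => u x - U x) (fun x => deriv u x - U1 x)
    (fun x => deriv (deriv u) x - U2 x)
    (fun x => ((hu x).hasDerivAt).sub (hDU x))
    (fun x => ((hu' x).hasDerivAt).sub (hDU1 x))
    hwode hw0 hw0'
  intro x
  have hx := sub_eq_zero.mp (key x)
  rw [hx]

lemma neg_one_pow_sub_c (m j : ℕ) (h : j ≤ m) :
    ((-1 : ℂ)) ^ (m - j) = (-1 : ℂ) ^ m * (-1 : ℂ) ^ j := by
  have h1 : ((-1 : ℂ)) ^ (m - j) * (-1 : ℂ) ^ j = (-1 : ℂ) ^ m := by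
    rw [← pow_add]; congr 1; omega
  have h2 : ((-1 : ℂ)) ^ j * ((-1 : ℂ)) ^ j = 1 := by
    rw [← pow_add, ← two_mul, pow_mul]; norm_num
  linear_combination ((-1 : ℂ)) ^ j * h1 - ((-1 : ℂ)) ^ (m - j) * h2


lemma frac_add_eq_zero (N1 D1 N2 D2 : ℂ) (h1 : D1 ≠ 0) (h2 : D2 ≠ 0)
    (h : N1 * D2 + D1 * N2 = 0) : N1 / D1 + N2 / D2 = 0 := by
  rw [div_add_div _ _ h1 h2, div_eq_zero_iff]; left; exact h

lemma frac_eq_frac (N1 D1 N2 D2 : ℂ) (h1 : D1 ≠ 0) (h2 : D2 ≠ 0)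
    (h : N1 * D2 = N2 * D1) : N1 / D1 = N2 / D2 := (div_eq_div_iff h1 h2).mpr h

lemma helm_d_rec (a ω κ : ℝ) (ha : (a : ℂ) ≠ 0) (hω : (ω : ℂ) ≠ 0)
    (hκω : (κ : ℂ) ^ 2 = (a : ℂ) * (ω : ℂ) ^ 2) (m ε j : ℕ) (hj : j < m) :
    (a : ℂ) * ((-1) ^ (m - (j + 1)) * ((2 * m + ε).factorial : ℂ)
        / ((2 * (j + 1) + ε).factorial : ℂ) / ((a : ℂ) * (ω : ℂ) ^ (2 * (m - (j + 1)) + 2)))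
      * ((2 * j + 2 + ε : ℕ) : ℂ) * ((2 * j + 1 + ε : ℕ) : ℂ)
    + (κ : ℂ) ^ 2 * ((-1) ^ (m - j) * ((2 * m + ε).factorial : ℂ)
        / ((2 * j + ε).factorial : ℂ) / ((a : ℂ) * (ω : ℂ) ^ (2 * (m - j) + 2))) = 0 := by
  have hnat : (2 * (j + 1) + ε).factorial
      = (2 * j + 2 + ε) * ((2 * j + 1 + ε) * (2 * j + ε).factorial) := by
    have e1 : 2 * (j + 1) + ε = (2 * j + ε) + 1 + 1 := by omega
    have e2 : 2 * j + 2 + ε = (2 * j + ε) + 1 + 1 := by omega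
    have e3 : 2 * j + 1 + ε = (2 * j + ε) + 1 := by omega
    rw [e1, Nat.factorial_succ, Nat.factorial_succ, e2, e3]
  have hfac : (((2 * (j + 1) + ε).factorial : ℕ) : ℂ)
      = ((2 * j + 2 + ε : ℕ) : ℂ) * (((2 * j + 1 + ε : ℕ) : ℂ) * ((2 * j + ε).factorial : ℂ)) := by
    rw [hnat]; push_cast; ring
  have e4 : m - j = (m - (j + 1)) + 1 := by omega
  have e5 : 2 * ((m - (j + 1)) + 1) + 2 = (2 * (m - (j + 1)) + 2) + 2 := by omega
  rw [hfac, e4, e5, pow_add ((ω : ℂ)) (2 * (m - (j + 1)) + 2) 2,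
    pow_succ ((-1 : ℂ)) (m - (j + 1)), hκω]
  have hf1 : ((2 * j + ε).factorial : ℂ) ≠ 0 := Nat.cast_ne_zero.mpr (Nat.factorial_ne_zero _)
  have hc1 : ((2 * j + 2 + ε : ℕ) : ℂ) ≠ 0 := Nat.cast_ne_zero.mpr (by omega)
  have hc2 : ((2 * j + 1 + ε : ℕ) : ℂ) ≠ 0 := Nat.cast_ne_zero.mpr (by omega)
  generalize ((2 * m + ε).factorial : ℂ) = L
  generalize hFg : ((2 * j + ε).factorial : ℂ) = F at hf1
  generalize hc1g : ((2 * j + 2 + ε : ℕ) : ℂ) = c1 at hc1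
  generalize hc2g : ((2 * j + 1 + ε : ℕ) : ℂ) = c2 at hc2
  generalize ((-1 : ℂ)) ^ (m - (j + 1)) = S
  generalize hWg : ((ω : ℂ)) ^ (2 * (m - (j + 1)) + 2) = W
  have hW : W ≠ 0 := hWg ▸ pow_ne_zero _ hω
  have hω2 : ((ω : ℂ)) ^ 2 ≠ 0 := pow_ne_zero _ hω
  have hD1 : (c1 * (c2 * F)) * ((a : ℂ) * W) ≠ 0 :=
    mul_ne_zero (mul_ne_zero hc1 (mul_ne_zero hc2 hf1)) (mul_ne_zero ha hW)
  have hD2 : F * ((a : ℂ) * (W * (ω : ℂ) ^ 2)) ≠ 0 :=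
    mul_ne_zero hf1 (mul_ne_zero ha (mul_ne_zero hW hω2))
  calc (a : ℂ) * (S * L / (c1 * (c2 * F)) / ((a : ℂ) * W)) * c1 * c2
        + (a : ℂ) * (ω : ℂ) ^ 2 * (S * -1 * L / F / ((a : ℂ) * (W * (ω : ℂ) ^ 2)))
      = ((a : ℂ) * S * L * c1 * c2) / ((c1 * (c2 * F)) * ((a : ℂ) * W))
        + ((a : ℂ) * (ω : ℂ) ^ 2 * S * (-1) * L) / (F * ((a : ℂ) * (W * (ω : ℂ) ^ 2))) := by
        ring
    _ = 0 := frac_add_eq_zero _ _ _ _ hD1 hD2 (by ring)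

lemma helm_d_m (a ω κ : ℝ) (ha : (a : ℂ) ≠ 0) (hω : (ω : ℂ) ≠ 0)
    (hκω : (κ : ℂ) ^ 2 = (a : ℂ) * (ω : ℂ) ^ 2) (m ε : ℕ) :
    (κ : ℂ) ^ 2 * ((-1) ^ (m - m) * ((2 * m + ε).factorial : ℂ)
        / ((2 * m + ε).factorial : ℂ) / ((a : ℂ) * (ω : ℂ) ^ (2 * (m - m) + 2))) = 1 := by
  rw [Nat.sub_self, hκω]
  have hf1 : ((2 * m + ε).factorial : ℂ) ≠ 0 := Nat.cast_ne_zero.mpr (Nat.factorial_ne_zero _)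
  field_simp

lemma helm_d_closed (a ω : ℝ) (ha : (a : ℂ) ≠ 0) (hω : (ω : ℂ) ≠ 0) (m ε j : ℕ) (hj : j ≤ m) :
    (-1) ^ (m - j) * ((2 * m + ε).factorial : ℂ)
        / ((2 * j + ε).factorial : ℂ) / ((a : ℂ) * (ω : ℂ) ^ (2 * (m - j) + 2))
    = -((-1 : ℂ) ^ (m + 1) * ((2 * m + ε).factorial : ℂ) / ((a : ℂ) * (ω : ℂ) ^ (2 * m + 2 + ε)))
        * ((-1 : ℂ) ^ j * (ω : ℂ) ^ (2 * j + ε) / ((2 * j + ε).factorial : ℂ)) := by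
  have hpow : (ω : ℂ) ^ (2 * m + 2 + ε) = (ω : ℂ) ^ (2 * (m - j) + 2) * (ω : ℂ) ^ (2 * j + ε) := by
    rw [← pow_add]; congr 1; omega
  rw [neg_one_pow_sub_c m j hj, hpow, pow_succ (-1 : ℂ) m]
  have hf1 : ((2 * j + ε).factorial : ℂ) ≠ 0 := Nat.cast_ne_zero.mpr (Nat.factorial_ne_zero _)
  generalize ((2 * m + ε).factorial : ℂ) = L
  generalize hFg : ((2 * j + ε).factorial : ℂ) = F at hf1
  generalize hMg : ((-1 : ℂ)) ^ m = M
  generalize hZg : ((-1 : ℂ)) ^ j = Z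
  generalize hWg : ((ω : ℂ)) ^ (2 * (m - j) + 2) = W
  generalize hOg : ((ω : ℂ)) ^ (2 * j + ε) = O
  have hW : W ≠ 0 := hWg ▸ pow_ne_zero _ hω
  have hO : O ≠ 0 := hOg ▸ pow_ne_zero _ hω
  have hD1 : F * ((a : ℂ) * W) ≠ 0 := mul_ne_zero hf1 (mul_ne_zero ha hW)
  have hD2 : ((a : ℂ) * (W * O)) * F ≠ 0 :=
    mul_ne_zero (mul_ne_zero ha (mul_ne_zero hW hO)) hf1
  calc M * Z * L / F / ((a : ℂ) * W)
      = (M * Z * L) / (F * ((a : ℂ) * W)) := by ring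
    _ = (-(M * -1 * L * (Z * O))) / (((a : ℂ) * (W * O)) * F) :=
        frac_eq_frac _ _ _ _ hD1 hD2 (by ring)
    _ = -(M * -1 * L / ((a : ℂ) * (W * O))) * (Z * O / F) := by ring

/-- equation (3.13) of the paper, closed form of `F_ℓ(h)` for constant
coefficients, applied to the monomial source `f(x) = (x - x_b)^ℓ`.  Part (i) is the even
case `ℓ = 2m`, part (ii) the odd case `ℓ = 2m + 1`; `ĥ := κh/√a`. -/
theorem constant_coefficient_monomial_source_expansion
    (a κ xb : ℝ) (ha : 0 < a) (hκ : 0 < κ) (m : ℕ) (u : ℝ → ℂ)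
    (hu : Differentiable ℝ u) (hu' : Differentiable ℝ (deriv u)) :
    ((∀ x : ℝ, (a : ℂ) * deriv (deriv u) x + (κ : ℂ) ^ 2 * u x = ((x - xb : ℝ) : ℂ) ^ (2 * m)) →
      ∀ h : ℝ, h ≠ 0 →
        u (xb + h) = u xb * (Real.cos (κ * h / Real.sqrt a) : ℂ)
          + deriv u xb * ((Real.sqrt a / κ * Real.sin (κ * h / Real.sqrt a) : ℝ) : ℂ)
          + (Nat.factorial (2 * m) : ℂ) * (h : ℂ) ^ (2 * m + 2) *
            ((Real.cos (κ * h / Real.sqrt a) : ℂ)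
              - ∑ j ∈ Finset.range (m + 1),
                  (-1 : ℂ) ^ j * ((κ * h / Real.sqrt a : ℝ) : ℂ) ^ (2 * j) /
                    (Nat.factorial (2 * j) : ℂ)) /
            ((-1 : ℂ) ^ (m + 1) * (a : ℂ) * ((κ * h / Real.sqrt a : ℝ) : ℂ) ^ (2 * m + 2))) ∧
    ((∀ x : ℝ, (a : ℂ) * deriv (deriv u) x + (κ : ℂ) ^ 2 * u x
        = ((x - xb : ℝ) : ℂ) ^ (2 * m + 1)) →
      ∀ h : ℝ, h ≠ 0 →
        u (xb + h) = u xb * (Real.cos (κ * h / Real.sqrt a) : ℂ)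
          + deriv u xb * ((Real.sqrt a / κ * Real.sin (κ * h / Real.sqrt a) : ℝ) : ℂ)
          + (Nat.factorial (2 * m + 1) : ℂ) * (h : ℂ) ^ (2 * m + 3) *
            ((Real.sin (κ * h / Real.sqrt a) : ℂ)
              - ∑ j ∈ Finset.range (m + 1),
                  (-1 : ℂ) ^ j * ((κ * h / Real.sqrt a : ℝ) : ℂ) ^ (2 * j + 1) /
                    (Nat.factorial (2 * j + 1) : ℂ)) /
            ((-1 : ℂ) ^ (m + 1) * (a : ℂ) * ((κ * h / Real.sqrt a : ℝ) : ℂ) ^ (2 * m + 3))) := by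
  have hsa : 0 < Real.sqrt a := Real.sqrt_pos.mpr ha
  set ω : ℝ := κ / Real.sqrt a with hωdef
  have hω : 0 < ω := div_pos hκ hsa
  have hκω : κ ^ 2 = a * ω ^ 2 := by
    rw [hωdef, div_pow, Real.sq_sqrt ha.le]; field_simp
  have hκωC : (κ : ℂ) ^ 2 = (a : ℂ) * (ω : ℂ) ^ 2 := by exact_mod_cast hκω
  have haC : (a : ℂ) ≠ 0 := by exact_mod_cast ha.ne'
  have hωC : (ω : ℂ) ≠ 0 := by exact_mod_cast hω.ne'
  have hMM : ((-1 : ℂ)) ^ (m + 1) * ((-1 : ℂ)) ^ (m + 1) = 1 := by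
    rw [← pow_add, ← two_mul, pow_mul]; norm_num
  constructor
  · -- even case
    intro hode h hh
    have hhC : (h : ℂ) ≠ 0 := by exact_mod_cast hh
    set d : ℕ → ℂ := fun j => (-1) ^ (m - j) * ((2 * m).factorial : ℂ)
      / ((2 * j).factorial : ℂ) / ((a : ℂ) * (ω : ℂ) ^ (2 * (m - j) + 2)) with hd
    have key := helm_sol a κ ω xb ha.ne' hω hκω m 0 (by norm_num) d
      (fun j hj => helm_d_rec a ω κ haC hωC hκωC m 0 j hj)
      (helm_d_m a ω κ haC hωC hκωC m 0)
      u hu hu' (fun x => by rw [Nat.add_zero, ← Complex.ofReal_sub]; exact hode x) (xb + h)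
    simp only [Nat.add_zero] at key
    have hS1 : (∑ j ∈ Finset.range (m + 1), d j * (0 : ℂ) ^ (2 * j)) = d 0 := by
      rw [Finset.sum_eq_single 0 (fun b _ hb => by rw [zero_pow (by omega), mul_zero])
        (fun hc => absurd (Finset.mem_range.mpr (by omega)) hc)]
      norm_num
    have hS2 : (∑ j ∈ Finset.range (m + 1),
        d j * ((2 * j : ℕ) : ℂ) * (0 : ℂ) ^ (2 * j - 1)) = 0 := by
      refine Finset.sum_eq_zero fun j _ => ?_
      match j with
      | 0 => norm_num
      | (n + 1) => rw [zero_pow (by omega), mul_zero]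
    have hsub : ((xb + h : ℝ) : ℂ) - (xb : ℂ) = (h : ℂ) := by push_cast; ring
    rw [hS1, hS2, hsub] at key
    rw [show κ * h / Real.sqrt a = ω * h from by rw [hωdef]; ring,
      show Real.sqrt a / κ = 1 / ω from by rw [hωdef, one_div_div]]
    simp only [Complex.ofReal_cos, Complex.ofReal_sin, Complex.ofReal_mul, Complex.ofReal_div,
      Complex.ofReal_one]
    rw [key]
    have hloc := fun (j : ℕ) (hj : j ≤ m) => helm_d_closed a ω haC hωC m 0 j hj
    simp only [Nat.add_zero] at hloc
    set S' := ∑ j ∈ Finset.range (m + 1),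
      (-1 : ℂ) ^ j * ((ω : ℂ) * (h : ℂ)) ^ (2 * j) / ((2 * j).factorial : ℂ) with hS'
    set cc := Complex.cos ((ω : ℂ) * (h : ℂ)) with hcc
    have hd0 : d 0 = -((-1 : ℂ) ^ (m + 1) * ((2 * m).factorial : ℂ)
        / ((a : ℂ) * (ω : ℂ) ^ (2 * m + 2))) := by
      have h0 := hloc 0 (Nat.zero_le m)
      simp only [hd]
      norm_num at h0 ⊢
      linear_combination h0
    have hsum2 : (∑ j ∈ Finset.range (m + 1), d j * (h : ℂ) ^ (2 * j))
        = -((-1 : ℂ) ^ (m + 1) * ((2 * m).factorial : ℂ)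
            / ((a : ℂ) * (ω : ℂ) ^ (2 * m + 2))) * S' := by
      rw [hS', Finset.mul_sum]
      refine Finset.sum_congr rfl fun j hj => ?_
      have hje : j ≤ m := by have := Finset.mem_range.mp hj; omega
      have hc := hloc j hje
      simp only [hd]
      rw [hc, mul_pow]
      ring
    have hD1 : ((-1 : ℂ) ^ (m + 1) * (a : ℂ) * ((ω : ℂ) * (h : ℂ)) ^ (2 * m + 2)) ≠ 0 :=
      mul_ne_zero (mul_ne_zero (pow_ne_zero _ (by norm_num)) haC)
        (pow_ne_zero _ (mul_ne_zero hωC hhC))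
    have hD2 : ((a : ℂ) * (ω : ℂ) ^ (2 * m + 2)) ≠ 0 := mul_ne_zero haC (pow_ne_zero _ hωC)
    have hT : ((2 * m).factorial : ℂ) * (h : ℂ) ^ (2 * m + 2) * (cc - S')
          / ((-1 : ℂ) ^ (m + 1) * (a : ℂ) * ((ω : ℂ) * (h : ℂ)) ^ (2 * m + 2))
        = (-1 : ℂ) ^ (m + 1) * ((2 * m).factorial : ℂ)
            / ((a : ℂ) * (ω : ℂ) ^ (2 * m + 2)) * (cc - S') := by
      rw [div_mul_eq_mul_div, div_eq_div_iff hD1 hD2, mul_pow]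
      linear_combination (-(((2 * m).factorial : ℂ) * (h : ℂ) ^ (2 * m + 2) * (cc - S')
        * (a : ℂ) * (ω : ℂ) ^ (2 * m + 2))) * hMM
    linear_combination hsum2 - cc * hd0 - hT
  · -- odd case
    intro hode h hh
    have hhC : (h : ℂ) ≠ 0 := by exact_mod_cast hh
    set d : ℕ → ℂ := fun j => (-1) ^ (m - j) * ((2 * m + 1).factorial : ℂ)
      / ((2 * j + 1).factorial : ℂ) / ((a : ℂ) * (ω : ℂ) ^ (2 * (m - j) + 2)) with hd
    have key := helm_sol a κ ω xb ha.ne' hω hκω m 1 (le_refl 1) d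
      (fun j hj => helm_d_rec a ω κ haC hωC hκωC m 1 j hj)
      (helm_d_m a ω κ haC hωC hκωC m 1)
      u hu hu' (fun x => by rw [← Complex.ofReal_sub]; exact hode x) (xb + h)
    have hS1 : (∑ j ∈ Finset.range (m + 1), d j * (0 : ℂ) ^ (2 * j + 1)) = 0 := by
      refine Finset.sum_eq_zero fun j _ => ?_
      rw [zero_pow (by omega), mul_zero]
    have hS2 : (∑ j ∈ Finset.range (m + 1),
        d j * ((2 * j + 1 : ℕ) : ℂ) * (0 : ℂ) ^ (2 * j + 1 - 1)) = d 0 := by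
      rw [Finset.sum_eq_single 0 (fun b _ hb => by rw [zero_pow (by omega), mul_zero])
        (fun hc => absurd (Finset.mem_range.mpr (by omega)) hc)]
      norm_num
    have hsub : ((xb + h : ℝ) : ℂ) - (xb : ℂ) = (h : ℂ) := by push_cast; ring
    rw [hS1, hS2, hsub] at key
    rw [show κ * h / Real.sqrt a = ω * h from by rw [hωdef]; ring,
      show Real.sqrt a / κ = 1 / ω from by rw [hωdef, one_div_div]]
    simp only [Complex.ofReal_cos, Complex.ofReal_sin, Complex.ofReal_mul, Complex.ofReal_div,
      Complex.ofReal_one]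
    rw [key]
    have hloc := fun (j : ℕ) (hj : j ≤ m) => helm_d_closed a ω haC hωC m 1 j hj
    have e231 : 2 * m + 2 + 1 = 2 * m + 3 := by omega
    rw [e231] at hloc
    set S' := ∑ j ∈ Finset.range (m + 1),
      (-1 : ℂ) ^ j * ((ω : ℂ) * (h : ℂ)) ^ (2 * j + 1) / ((2 * j + 1).factorial : ℂ) with hS'
    set ss := Complex.sin ((ω : ℂ) * (h : ℂ)) with hss
    have hd0 : d 0 = -((-1 : ℂ) ^ (m + 1) * ((2 * m + 1).factorial : ℂ)
        / ((a : ℂ) * (ω : ℂ) ^ (2 * m + 3))) * (ω : ℂ) := by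
      have h0 := hloc 0 (Nat.zero_le m)
      simp only [hd]
      norm_num at h0 ⊢
      linear_combination h0
    have hsum2 : (∑ j ∈ Finset.range (m + 1), d j * (h : ℂ) ^ (2 * j + 1))
        = -((-1 : ℂ) ^ (m + 1) * ((2 * m + 1).factorial : ℂ)
            / ((a : ℂ) * (ω : ℂ) ^ (2 * m + 3))) * S' := by
      rw [hS', Finset.mul_sum]
      refine Finset.sum_congr rfl fun j hj => ?_
      have hje : j ≤ m := by have := Finset.mem_range.mp hj; omega
      have hc := hloc j hje
      simp only [hd]
      rw [hc, mul_pow]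
      ring
    have hD1 : ((-1 : ℂ) ^ (m + 1) * (a : ℂ) * ((ω : ℂ) * (h : ℂ)) ^ (2 * m + 3)) ≠ 0 :=
      mul_ne_zero (mul_ne_zero (pow_ne_zero _ (by norm_num)) haC)
        (pow_ne_zero _ (mul_ne_zero hωC hhC))
    have hD2 : ((a : ℂ) * (ω : ℂ) ^ (2 * m + 3)) ≠ 0 := mul_ne_zero haC (pow_ne_zero _ hωC)
    have hT : ((2 * m + 1).factorial : ℂ) * (h : ℂ) ^ (2 * m + 3) * (ss - S')
          / ((-1 : ℂ) ^ (m + 1) * (a : ℂ) * ((ω : ℂ) * (h : ℂ)) ^ (2 * m + 3))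
        = (-1 : ℂ) ^ (m + 1) * ((2 * m + 1).factorial : ℂ)
            / ((a : ℂ) * (ω : ℂ) ^ (2 * m + 3)) * (ss - S') := by
      rw [div_mul_eq_mul_div, div_eq_div_iff hD1 hD2, mul_pow]
      linear_combination (-(((2 * m + 1).factorial : ℂ) * (h : ℂ) ^ (2 * m + 3) * (ss - S')
        * (a : ℂ) * (ω : ℂ) ^ (2 * m + 3))) * hMM
    have hd0ω : d 0 / (ω : ℂ) = -((-1 : ℂ) ^ (m + 1) * ((2 * m + 1).factorial : ℂ)
        / ((a : ℂ) * (ω : ℂ) ^ (2 * m + 3))) := by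
      rw [hd0, mul_div_assoc, div_self hωC, mul_one]
    linear_combination hsum2 - ss * hd0ω - hT
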